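/- Under the optimal resampling scheme (deterministic keeping of weights above $1/C$ plus stratified resampling of the rest), no particle is duplicated: the set of surviving particles is a subset of the original distinct particles, each appearing at most once. -/
import Mathlib

lemma exists_unique_strat (r : ℕ) (g : ℕ → ℝ) (hg : ∀ l, 0 ≤ g l)
    (t : ℝ) (ht0 : 0 < t)
    (htT : t ≤ ∑ l ∈ Finset.range r, g l) :
    ∃! j : ℕ, j < r ∧ (∑ l ∈ Finset.range j, g l) < t ∧
      t ≤ (∑ l ∈ Finset.range j, g l) + g j := by
  have hmono : ∀ a b : ℕ, a ≤ b →
      (∑ l ∈ Finset.range a, g l) ≤ ∑ l ∈ Finset.range b, g l := fun a b hab =>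
    Finset.sum_le_sum_of_subset_of_nonneg (Finset.range_subset_range.2 hab) (fun l _ _ => hg l)
  have hr : 0 < r := by
    by_contra h
    push_neg at h
    have : r = 0 := by omega
    rw [this] at htT
    simp at htT
    linarith
  have hex : ∃ j, t ≤ ∑ l ∈ Finset.range (j + 1), g l := by
    refine ⟨r - 1, ?_⟩
    have h1 : r - 1 + 1 = r := by omega
    rw [h1]; exact htT
  have hfind : t ≤ ∑ l ∈ Finset.range (Nat.find hex + 1), g l := Nat.find_spec hex
  set j := Nat.find hex with hj
  have hlt : (∑ l ∈ Finset.range j, g l) < t := by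
    rcases Nat.eq_zero_or_pos j with h0 | h0
    · rw [h0]; simpa using ht0
    · have hm := Nat.find_min hex (m := j - 1) (by omega)
      push_neg at hm
      have h1 : j - 1 + 1 = j := by omega
      rwa [h1] at hm
  have hjr : j < r := by
    by_contra h
    push_neg at h
    exact absurd (le_trans htT (hmono _ _ h)) (not_le.2 hlt)
  refine ⟨j, ⟨hjr, hlt, by rwa [Finset.sum_range_succ] at hfind⟩, ?_⟩
  rintro j' ⟨hj'r, hlt', hle'⟩
  by_contra hne
  rcases lt_or_gt_of_ne hne with h | h
  · have hm := Nat.find_min hex (m := j') h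
    rw [Finset.sum_range_succ] at hm
    exact hm hle'
  · have h2 := hmono (j + 1) j' h
    rw [Finset.sum_range_succ] at h2 hfind
    linarith



open MeasureTheory

/-- The optimal resampling scheme of the discrete particle filter — keeping
deterministically the `L` particles with weight strictly above `1/C` and
choosing the remaining survivors by stratified resampling among the residual
particles with inclusion probabilities `C * W i` — produces, almost surely in
the uniform variable `u`, a duplicate-free set of survivors (a subset of the
original index set, each particle appearing at most once) of size exactly `N`. -/
theorem optimal_resampling_no_duplicates
    (M N : ℕ) (hN : 0 < N) (hNM : N < M)
    (W : Fin M → ℝ) (hpos : ∀ i, 0 < W i) (hsum : ∑ i, W i = 1)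
    (C : ℝ) (hC : 0 < C) (heq : ∑ i, min 1 (C * W i) = (N : ℝ)) :
    ∀ᵐ u ∂(volume.restrict (Set.Icc (0 : ℝ) 1)),
      Nat.card ({i : Fin M | 1 / C < W i} ∪
        {i : Fin M | W i ≤ 1 / C ∧ ∃ k ∈ Finset.range
            (N - (Finset.univ.filter fun i : Fin M => 1 / C < W i).card),
          (∑ j ∈ (Finset.univ.filter fun j : Fin M => W j ≤ 1 / C).filter
              fun j => j < i, C * W j) < u + k ∧
          u + k ≤ (∑ j ∈ (Finset.univ.filter fun j : Fin M => W j ≤ 1 / C).filter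
              fun j => j < i, C * W j) + C * W i} : Set (Fin M)) = N := by
  classical
  set Kfin := Finset.univ.filter (fun i : Fin M => 1 / C < W i) with hKdef
  set Rfin := Finset.univ.filter (fun i : Fin M => W i ≤ 1 / C) with hRdef
  set n := N - Kfin.card with hndef
  set r := Rfin.card with hrdef
  have hmemK : ∀ i, i ∈ Kfin ↔ 1 / C < W i := by intro i; simp [hKdef]
  have hmemR : ∀ i, i ∈ Rfin ↔ W i ≤ 1 / C := by intro i; simp [hRdef]
  have hRle : ∀ i ∈ Rfin, C * W i ≤ 1 := by
    intro i hi
    have h1 := (hmemR i).1 hi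
    have h2 := (le_div_iff₀ hC).1 h1
    linarith [h2, mul_comm (W i) C]
  have hKgt : ∀ i ∈ Kfin, 1 < C * W i := by
    intro i hi
    have h1 := (hmemK i).1 hi
    have h2 := (div_lt_iff₀ hC).1 h1
    linarith [h2, mul_comm (W i) C]
  have hKR : Kfin ∪ Rfin = Finset.univ := by
    ext i
    simp only [Finset.mem_union, hmemK, hmemR, Finset.mem_univ, iff_true]
    exact (lt_or_ge (1 / C) (W i)).imp id id
  have hdisjKR : Disjoint Kfin Rfin := by
    rw [Finset.disjoint_left]
    intro i hk hr
    have := (hmemK i).1 hk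
    have := (hmemR i).1 hr
    linarith
  have hsplit : (Kfin.card : ℝ) + ∑ i ∈ Rfin, C * W i = (N : ℝ) := by
    have h1 : ∑ i ∈ Kfin, min 1 (C * W i) = (Kfin.card : ℝ) := by
      rw [Finset.sum_congr rfl (fun i hi => min_eq_left (le_of_lt (hKgt i hi)))]
      simp
    have h2 : ∑ i ∈ Rfin, min 1 (C * W i) = ∑ i ∈ Rfin, C * W i :=
      Finset.sum_congr rfl (fun i hi => min_eq_right (hRle i hi))
    rw [← heq, ← hKR, Finset.sum_union hdisjKR, h1, h2]
  have hcardKR : Kfin.card + r = M := by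
    rw [hrdef, ← Finset.card_union_of_disjoint hdisjKR, hKR, Finset.card_univ, Fintype.card_fin]
  have hrpos : 0 < r := by
    by_contra h
    push_neg at h
    have hr0 : r = 0 := by omega
    have hRempty : Rfin = ∅ := Finset.card_eq_zero.1 hr0
    rw [hRempty, Finset.sum_empty] at hsplit
    have : (Kfin.card : ℝ) = (N : ℝ) := by linarith
    have hKN : Kfin.card = N := by exact_mod_cast this
    omega
  have hRne : Rfin.Nonempty := Finset.card_pos.1 hrpos
  have hTpos : 0 < ∑ i ∈ Rfin, C * W i :=
    Finset.sum_pos (fun i _ => mul_pos hC (hpos i)) hRne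
  have hLN : Kfin.card < N := by
    have : (Kfin.card : ℝ) < (N : ℝ) := by linarith
    exact_mod_cast this
  have hnN : (n : ℝ) = (N : ℝ) - (Kfin.card : ℝ) := by
    rw [hndef]
    push_cast [Nat.cast_sub hLN.le]
    ring
  have hrcard : Rfin.card = r := hrdef.symm
  set e := Rfin.orderIsoOfFin hrcard with hedef
  set g : ℕ → ℝ := fun l => if h : l < r then C * W ((e ⟨l, h⟩ : Rfin) : Fin M) else 0 with hgdef
  have hgval : ∀ (l : ℕ) (h : l < r), g l = C * W ((e ⟨l, h⟩ : Rfin) : Fin M) := by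
    intro l h
    rw [hgdef]
    simp [h]
  have hgnn : ∀ l, 0 ≤ g l := by
    intro l
    rw [hgdef]
    by_cases h : l < r
    · simp only [h, dif_pos]
      exact le_of_lt (mul_pos hC (hpos _))
    · simp [h]
  have hgle1 : ∀ l, g l ≤ 1 := by
    intro l
    rw [hgdef]
    by_cases h : l < r
    · simp only [h, dif_pos]
      exact hRle _ (e ⟨l, h⟩).2
    · simp [h]
  have hPr : ∑ l ∈ Finset.range r, g l = ∑ i ∈ Rfin, C * W i := by
    rw [← Fin.sum_univ_eq_sum_range]
    rw [Finset.sum_congr rfl (fun (l : Fin r) _ => by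
      rw [hgval l.val l.isLt, Fin.eta])]
    calc ∑ l : Fin r, C * W ((e l : Rfin) : Fin M)
        = ∑ i : Rfin, C * W (i : Fin M) := Equiv.sum_comp e.toEquiv (fun i : Rfin => C * W (i : Fin M))
      _ = ∑ i ∈ Rfin, C * W i := Finset.sum_coe_sort Rfin (fun i => C * W i)
  have hS : ∀ j : Fin r, (∑ i' ∈ Rfin.filter (fun j' => j' < ((e j : Rfin) : Fin M)), C * W i')
      = ∑ l ∈ Finset.range j.val, g l := by
    intro j
    have h1 : (∑ i' ∈ Rfin.filter (fun j' => j' < ((e j : Rfin) : Fin M)), C * W i')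
        = ∑ i' ∈ Rfin, if i' < ((e j : Rfin) : Fin M) then C * W i' else 0 :=
      Finset.sum_filter _ _
    have h2 : (∑ i' ∈ Rfin, if i' < ((e j : Rfin) : Fin M) then C * W i' else 0)
        = ∑ i' : Rfin, if (i' : Fin M) < ((e j : Rfin) : Fin M) then C * W (i' : Fin M) else 0 :=
      (Finset.sum_coe_sort Rfin _).symm
    have h3 : (∑ i' : Rfin, if (i' : Fin M) < ((e j : Rfin) : Fin M) then C * W (i' : Fin M) else 0)
        = ∑ l : Fin r, if ((e l : Rfin) : Fin M) < ((e j : Rfin) : Fin M)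
            then C * W ((e l : Rfin) : Fin M) else 0 :=
      (Equiv.sum_comp e.toEquiv _).symm
    have h4 : ∀ l : Fin r, (((e l : Rfin) : Fin M) < ((e j : Rfin) : Fin M)) ↔ l.val < j.val := by
      intro l
      rw [Subtype.coe_lt_coe, e.lt_iff_lt]
      exact Fin.lt_iff_val_lt_val
    have h5 : (∑ l : Fin r, if ((e l : Rfin) : Fin M) < ((e j : Rfin) : Fin M)
            then C * W ((e l : Rfin) : Fin M) else 0)
        = ∑ l : Fin r, if l.val < j.val then g l.val else 0 := by
      refine Finset.sum_congr rfl (fun l _ => ?_)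
      rw [if_congr (h4 l) rfl rfl, hgval l.val l.isLt, Fin.eta]
    have h6 : (∑ l : Fin r, if l.val < j.val then g l.val else 0)
        = ∑ l ∈ Finset.range r, if l < j.val then g l else 0 :=
      Fin.sum_univ_eq_sum_range (fun l => if l < j.val then g l else 0) r
    have h7 : (∑ l ∈ Finset.range r, if l < j.val then g l else 0)
        = ∑ l ∈ (Finset.range r).filter (fun l => l < j.val), g l :=
      (Finset.sum_filter _ _).symm
    have h8 : (Finset.range r).filter (fun l => l < j.val) = Finset.range j.val := by
      ext l
      simp only [Finset.mem_filter, Finset.mem_range]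
      have := j.isLt
      omega
    rw [h1, h2, h3, h5, h6, h7, h8]
  rw [← Measure.restrict_congr_set Ioc_ae_eq_Icc]
  filter_upwards [ae_restrict_mem measurableSet_Ioc] with u hu
  obtain ⟨hu0, hu1⟩ := hu
  -- existence and uniqueness of the selected index for each stratum
  have hEU : ∀ k : Fin n, ∃! j : ℕ, j < r ∧ (∑ l ∈ Finset.range j, g l) < u + (k : ℕ) ∧
      u + (k : ℕ) ≤ (∑ l ∈ Finset.range j, g l) + g j := by
    intro k
    refine exists_unique_strat r g hgnn _ (by have : (0:ℝ) ≤ ((k : ℕ) : ℝ) := Nat.cast_nonneg _; linarith) ?_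
    rw [hPr]
    have hk : ((k : ℕ) : ℝ) + 1 ≤ (n : ℝ) := by exact_mod_cast Nat.succ_le_of_lt k.isLt
    linarith [hnN, hsplit]
  set J : Fin n → ℕ := fun k => (hEU k).choose with hJdef
  have hJspec : ∀ k : Fin n, J k < r ∧ (∑ l ∈ Finset.range (J k), g l) < u + (k : ℕ) ∧
      u + (k : ℕ) ≤ (∑ l ∈ Finset.range (J k), g l) + g (J k) := fun k => (hEU k).choose_spec.1
  have hJuniq : ∀ (k : Fin n) (j : ℕ), (j < r ∧ (∑ l ∈ Finset.range j, g l) < u + (k : ℕ) ∧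
      u + (k : ℕ) ≤ (∑ l ∈ Finset.range j, g l) + g j) → j = J k :=
    fun k j h => (hEU k).choose_spec.2 j h
  set f : Fin n → Fin M := fun k => ((e ⟨J k, (hJspec k).1⟩ : Rfin) : Fin M) with hfdef
  have hfinj : Function.Injective f := by
    intro k1 k2 hf
    have hJ12 : J k1 = J k2 := by
      have h1 : (e ⟨J k1, (hJspec k1).1⟩ : Rfin) = e ⟨J k2, (hJspec k2).1⟩ :=
        Subtype.coe_injective hf
      exact congrArg Fin.val (e.injective h1)
    by_contra hne
    have hne' : (k1 : ℕ) ≠ (k2 : ℕ) := fun h => hne (Fin.ext h)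
    rcases lt_or_gt_of_ne hne' with h | h
    · have hc : ((k1 : ℕ) : ℝ) + 1 ≤ ((k2 : ℕ) : ℝ) := by exact_mod_cast h
      have ha := (hJspec k1).2.1
      have hb := (hJspec k2).2.2
      rw [hJ12] at ha
      linarith [hgle1 (J k2)]
    · have hc : ((k2 : ℕ) : ℝ) + 1 ≤ ((k1 : ℕ) : ℝ) := by exact_mod_cast h
      have ha := (hJspec k2).2.1
      have hb := (hJspec k1).2.2
      rw [hJ12] at hb
      linarith [hgle1 (J k2)]
  have hdisj : Disjoint (↑Kfin : Set (Fin M)) (Set.range f) := by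
    rw [Set.disjoint_left]
    rintro i hiK ⟨k, rfl⟩
    have h1 := (hmemK _).1 (Finset.mem_coe.1 hiK)
    have h2 := (hmemR _).1 (e ⟨J k, (hJspec k).1⟩).2
    simp only [hfdef] at h1
    linarith
  have hrange : (Set.range f).ncard = n := by
    have h1 : Nat.card (Set.range f) = Nat.card (Fin n) := Nat.card_range_of_injective hfinj
    rw [Nat.card_coe_set_eq] at h1
    rw [h1, Nat.card_eq_fintype_card, Fintype.card_fin]
  have hcardgoal : ∀ S : Set (Fin M), S = ↑Kfin ∪ Set.range f → Nat.card S = N := by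
    intro S hSeq
    rw [hSeq, Nat.card_coe_set_eq,
      Set.ncard_union_eq hdisj (Set.toFinite _) (Set.toFinite _),
      Set.ncard_coe_finset, hrange]
    omega
  apply hcardgoal
  ext i
  simp only [Set.mem_union, Set.mem_setOf_eq, Finset.mem_coe, Set.mem_range]
  constructor
  · rintro (h | ⟨hiR, k, hk, h1, h2⟩)
    · exact Or.inl ((hmemK i).2 h)
    · right
      have hk' : k < n := Finset.mem_range.1 hk
      have hiRf : i ∈ Rfin := (hmemR i).2 hiR
      set j : Fin r := e.symm ⟨i, hiRf⟩ with hjdef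
      have hej : ((e j : Rfin) : Fin M) = i := by rw [hjdef, e.apply_symm_apply]
      have hSj := hS j
      rw [hej] at hSj
      have hgj : g j.val = C * W i := by rw [hgval j.val j.isLt, Fin.eta, hej]
      have huniq : j.val = J ⟨k, hk'⟩ :=
        hJuniq ⟨k, hk'⟩ j.val ⟨j.isLt, by rw [← hSj]; exact h1, by rw [← hSj, hgj]; exact h2⟩
      refine ⟨⟨k, hk'⟩, ?_⟩
      simp only [hfdef]
      have hmk : (⟨J ⟨k, hk'⟩, (hJspec ⟨k, hk'⟩).1⟩ : Fin r) = j := by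
        apply Fin.ext
        simp [← huniq]
      rw [hmk, hej]
  · rintro (h | ⟨k, rfl⟩)
    · exact Or.inl ((hmemK i).1 h)
    · right
      have hmemfk : f k ∈ Rfin := by
        simp only [hfdef]
        exact (e ⟨J k, (hJspec k).1⟩).2
      refine ⟨(hmemR _).1 hmemfk, k.val, Finset.mem_range.2 k.isLt, ?_, ?_⟩
      · have hSk := hS ⟨J k, (hJspec k).1⟩
        simp only [hfdef]
        rw [hSk]
        exact (hJspec k).2.1
      · have hSk := hS ⟨J k, (hJspec k).1⟩
        have hgk := hgval (J k) (hJspec k).1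
        simp only [hfdef]
        rw [hSk, ← hgk]
        exact (hJspec k).2.2
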